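/- There exists a continuous linear operator U : ℓ₁ → ℓ₁ which is an isometric involution (U ∘ U = id and ‖U x‖ = ‖x‖ for all x) such that for every separable real Banach space E and every continuous linear isometric involution f : E → E (f ∘ f = id and ‖f x‖ = ‖x‖ for all x), there exists a surjective continuous linear operator q : ℓ₁ → E with operator norm at most 1 satisfying f ∘ q = q ∘ U. -/

import Mathlib

open TopologicalSpace

/-- `ℓ₁` : the real Banach space of summable sequences. -/
noncomputable abbrev ellOne : Type := lp (fun _ : ℕ => ℝ) 1

set_option linter.unusedSectionVars false

def sw : ℕ → ℕ := fun n => if Even n then n + 1 else n - 1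

lemma sw_sw (n : ℕ) : sw (sw n) = n := by
  rcases Nat.even_or_odd n with h | h
  · simp [sw, h, Nat.even_add_one, Nat.not_even_iff_odd, Even.add_one h]
  · obtain ⟨m, rfl⟩ := h
    simp [sw, Nat.not_even_iff_odd, Nat.even_add_one, parity_simps]

def swE : ℕ ≃ ℕ := ⟨sw, sw, sw_sw, sw_sw⟩

lemma summable_coe (x : ellOne) : Summable fun n => ‖x n‖ := by
  have := lp.memℓp x
  rw [memℓp_gen_iff (by norm_num : 0 < (1 : ENNReal).toReal)] at this
  simpa using this

lemma norm_eq (x : ellOne) : ‖x‖ = ∑' n, ‖x n‖ := by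
  have := lp.norm_eq_tsum_rpow (by norm_num : 0 < (1 : ENNReal).toReal) x
  simpa using this

lemma mem_comp (e : ℕ ≃ ℕ) (x : ellOne) : Memℓp (fun n => x (e n)) 1 := by
  apply memℓp_gen
  simpa [Function.comp_def] using e.summable_iff.2 (summable_coe x)

noncomputable def Umap : ellOne →L[ℝ] ellOne :=
  LinearMap.mkContinuous
    { toFun := fun x => ⟨fun n => x (sw n), mem_comp swE x⟩
      map_add' := fun x y => by ext n; simp [lp.coeFn_add]; rfl
      map_smul' := fun c x => by ext n; simp [lp.coeFn_smul] } 1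
    (fun x => by
      have h1 : ‖(⟨fun n => x (sw n), mem_comp swE x⟩ : ellOne)‖ = ∑' n, ‖x (sw n)‖ := norm_eq _
      have h2 : ∑' n, ‖x (sw n)‖ = ∑' n, ‖x n‖ := swE.tsum_eq (fun n => ‖x n‖)
      simp only [LinearMap.coe_mk, AddHom.coe_mk, one_mul]
      rw [h1, h2, ← norm_eq])

lemma Umap_apply (x : ellOne) (n : ℕ) : (Umap x) n = x (sw n) := rfl

lemma Umap_invol (x : ellOne) : Umap (Umap x) = x := by
  ext n; simp [Umap_apply, sw_sw]

lemma Umap_norm (x : ellOne) : ‖Umap x‖ = ‖x‖ := by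
  rw [norm_eq, norm_eq]
  exact (swE.tsum_eq (fun n => ‖x n‖))

lemma sw_even (k : ℕ) : sw (2 * k) = 2 * k + 1 := by simp [sw]
lemma sw_odd (k : ℕ) : sw (2 * k + 1) = 2 * k := by simp [sw, parity_simps]

section
variable {E : Type} [NormedAddCommGroup E] [NormedSpace ℝ E] [CompleteSpace E]

lemma summable_norm_smul (x : ellOne) (z : ℕ → E) (hz : ∀ n, ‖z n‖ ≤ 1) :
    Summable fun n => ‖x n • z n‖ := by
  apply Summable.of_nonneg_of_le (fun n => norm_nonneg _) _ (summable_coe x)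
  intro n
  rw [norm_smul]
  calc ‖x n‖ * ‖z n‖ ≤ ‖x n‖ * 1 := by gcongr; exact hz n
    _ = ‖x n‖ := mul_one _

lemma summable_smul (x : ellOne) (z : ℕ → E) (hz : ∀ n, ‖z n‖ ≤ 1) :
    Summable fun n => x n • z n :=
  (summable_norm_smul x z hz).of_norm

noncomputable def qmap (z : ℕ → E) (hz : ∀ n, ‖z n‖ ≤ 1) : ellOne →L[ℝ] E :=
  LinearMap.mkContinuous
    { toFun := fun x => ∑' n, x n • z n
      map_add' := fun x y => by
        show ∑' n, ((x + y : ellOne) n) • z n = _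
        have h : ∀ n, ((x + y : ellOne) n) • z n = x n • z n + y n • z n := fun n => by
          rw [lp.coeFn_add]; simp [add_smul]
        rw [tsum_congr h, Summable.tsum_add (summable_smul x z hz) (summable_smul y z hz)]
      map_smul' := fun c x => by
        show ∑' n, ((c • x : ellOne) n) • z n = _
        have h : ∀ n, ((c • x : ellOne) n) • z n = c • (x n • z n) := fun n => by
          rw [lp.coeFn_smul]; simp [smul_smul]
        rw [tsum_congr h]
        exact (((summable_smul x z hz).hasSum.const_smul c).tsum_eq) } 1
    (fun x => by
      simp only [LinearMap.coe_mk, AddHom.coe_mk, one_mul]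
      calc ‖∑' n, x n • z n‖ ≤ ∑' n, ‖x n • z n‖ :=
            norm_tsum_le_tsum_norm (summable_norm_smul x z hz)
        _ ≤ ∑' n, ‖x n‖ := by
            refine Summable.tsum_le_tsum (fun n => ?_) (summable_norm_smul x z hz) (summable_coe x)
            rw [norm_smul]
            calc ‖x n‖ * ‖z n‖ ≤ ‖x n‖ * 1 := by gcongr; exact hz n
              _ = ‖x n‖ := mul_one _
        _ = ‖x‖ := (norm_eq x).symm)

lemma qmap_apply (z : ℕ → E) (hz : ∀ n, ‖z n‖ ≤ 1) (x : ellOne) :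
    qmap z hz x = ∑' n, x n • z n := rfl

lemma qmap_norm_le (z : ℕ → E) (hz : ∀ n, ‖z n‖ ≤ 1) : ‖qmap z hz‖ ≤ 1 :=
  LinearMap.mkContinuous_norm_le _ (by norm_num) _

lemma qmap_single (z : ℕ → E) (hz : ∀ n, ‖z n‖ ≤ 1) (n : ℕ) :
    qmap z hz (lp.single 1 n (1:ℝ)) = z n := by
  rw [qmap_apply]
  rw [tsum_eq_single n (fun m hm => by rw [lp.single_apply_ne _ _ _ hm, zero_smul])]
  rw [lp.single_apply_self, one_smul]

lemma qmap_equivariant (z : ℕ → E) (hz : ∀ n, ‖z n‖ ≤ 1) (f : E →L[ℝ] E)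
    (hzf : ∀ n, f (z n) = z (sw n)) (x : ellOne) :
    f (qmap z hz x) = qmap z hz (Umap x) := by
  rw [qmap_apply, qmap_apply, ContinuousLinearMap.map_tsum f (summable_smul x z hz)]
  have h1 : ∀ n, f (x n • z n) = x n • z (sw n) := fun n => by
    rw [map_smul, hzf]
  rw [tsum_congr h1]
  have h2 := swE.tsum_eq (fun m => x (sw m) • z m)
  have h3 : ∀ n, x (sw (swE n)) • z (swE n) = x n • z (sw n) := fun n => by
    show x (sw (sw n)) • z (sw n) = _
    rw [sw_sw]
  calc ∑' n, x n • z (sw n) = ∑' n, x (sw (swE n)) • z (swE n) := (tsum_congr h3).symm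
    _ = ∑' n, x (sw n) • z n := h2
    _ = ∑' n, (Umap x) n • z n := tsum_congr fun n => rfl

end

section
variable {E : Type} [NormedAddCommGroup E] [NormedSpace ℝ E] [CompleteSpace E]

lemma qmap_surj_ball (z : ℕ → E) (hz : ∀ n, ‖z n‖ ≤ 1) (d : ℕ → E)
    (hzd : ∀ k, z (2 * k) = d k)
    (hd : ∀ w : E, ‖w‖ ≤ 1 → ∀ ε > 0, ∃ k, ‖w - d k‖ < ε)
    (y : E) (hy : ‖y‖ ≤ 1) : ∃ x : ellOne, qmap z hz x = y := by
  have hd1 : ∀ i, ‖d i‖ ≤ 1 := fun i => by rw [← hzd]; exact hz _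
  set ch : {w : E // ‖w‖ ≤ 1} → ℕ := fun w => Classical.choose (hd w w.2 (1/2) (by norm_num))
    with hch
  have hchs : ∀ w : {w : E // ‖w‖ ≤ 1}, ‖(w : E) - d (ch w)‖ < 1/2 := fun w =>
    Classical.choose_spec (hd w w.2 (1/2) (by norm_num))
  set next : {w : E // ‖w‖ ≤ 1} → {w : E // ‖w‖ ≤ 1} := fun w =>
    ⟨(2:ℝ) • ((w : E) - d (ch w)), by
      rw [norm_smul]
      rw [Real.norm_ofNat]
      linarith [hchs w]⟩ with hnext
  set R : ℕ → {w : E // ‖w‖ ≤ 1} := fun j => next^[j] ⟨y, hy⟩ with hR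
  set k : ℕ → ℕ := fun j => ch (R j) with hk
  have hRsucc : ∀ m, (R (m+1) : E) = (2:ℝ) • ((R m : E) - d (k m)) := fun m => by
    show ((next^[m+1] ⟨y, hy⟩ : {w : E // ‖w‖ ≤ 1}) : E) = _
    rw [Function.iterate_succ_apply']
  have hA : ∀ m, ((1:ℝ)/2)^m • (R m : E) = y - ∑ i ∈ Finset.range m, ((1:ℝ)/2)^i • d (k i) := by
    intro m
    induction m with
    | zero => simp [hR]
    | succ m ih =>
      calc ((1:ℝ)/2)^(m+1) • (R (m+1) : E)
          = ((1:ℝ)/2)^(m+1) • ((2:ℝ) • ((R m : E) - d (k m))) := by rw [hRsucc]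
        _ = ((1:ℝ)/2)^m • ((R m : E) - d (k m)) := by
            rw [smul_smul]
            congr 1
            rw [pow_succ]
            ring
        _ = ((1:ℝ)/2)^m • (R m : E) - ((1:ℝ)/2)^m • d (k m) := smul_sub _ _ _
        _ = y - ∑ i ∈ Finset.range (m+1), ((1:ℝ)/2)^i • d (k i) := by
            rw [ih, Finset.sum_range_succ, sub_sub]
  -- the series of d's sums to y
  have hgs : Summable (fun i => ((1:ℝ)/2)^i • d (k i)) := by
    apply Summable.of_norm_bounded (g := fun i => ((1:ℝ)/2)^i)
      (summable_geometric_of_lt_one (by norm_num) (by norm_num))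
    intro i
    simp only [norm_smul, norm_pow, norm_div, norm_one, Real.norm_ofNat]
    calc (1/2)^i * ‖d (k i)‖ ≤ (1/2)^i * 1 := by gcongr; exact hd1 _
      _ = (1/2:ℝ)^i := mul_one _
  have hsumy : HasSum (fun i => ((1:ℝ)/2)^i • d (k i)) y := by
    have h1 := hgs.hasSum.tendsto_sum_nat
    have h2 : Filter.Tendsto (fun m => ∑ i ∈ Finset.range m, ((1:ℝ)/2)^i • d (k i))
        Filter.atTop (nhds y) := by
      have h3 : Filter.Tendsto (fun m => y - ∑ i ∈ Finset.range m, ((1:ℝ)/2)^i • d (k i))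
          Filter.atTop (nhds 0) := by
        apply squeeze_zero_norm (fun m => ?_)
          (tendsto_pow_atTop_nhds_zero_of_lt_one (by norm_num) (by norm_num) :
            Filter.Tendsto (fun m : ℕ => ((1:ℝ)/2)^m) Filter.atTop (nhds 0))
        rw [← hA m]; simp only [norm_smul, norm_pow, norm_div, norm_one, Real.norm_ofNat]
        calc (1/2)^m * ‖(R m : E)‖ ≤ (1/2)^m * 1 := by gcongr; exact (R m).2
          _ = (1/2:ℝ)^m := mul_one _
      have := Filter.Tendsto.sub (tendsto_const_nhds : Filter.Tendsto (fun _ : ℕ => y)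
        Filter.atTop (nhds y)) h3
      simpa using this
    rw [(tendsto_nhds_unique h1 h2 : ∑' i, ((1:ℝ)/2)^i • d (k i) = y)] at h1
    exact (Summable.hasSum_iff_tendsto_nat hgs).2 h1
  -- build x
  have hxs : Summable (fun i => ((1:ℝ)/2)^i • (lp.single 1 (2 * k i) (1:ℝ) : ellOne)) := by
    apply Summable.of_norm_bounded (g := fun i => ((1:ℝ)/2)^i)
      (summable_geometric_of_lt_one (by norm_num) (by norm_num))
    intro i
    simp only [norm_smul, norm_pow, norm_div, norm_one, Real.norm_ofNat]
    have : ‖(lp.single 1 (2 * k i) (1:ℝ) : ellOne)‖ = 1 := by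
      have := lp.norm_single (E := fun _ : ℕ => ℝ) (by norm_num : (0 : ENNReal) < 1)
        (2 * k i) (1:ℝ)
      simpa using this
    rw [this, mul_one]
  refine ⟨∑' i, ((1:ℝ)/2)^i • (lp.single 1 (2 * k i) (1:ℝ) : ellOne), ?_⟩
  rw [ContinuousLinearMap.map_tsum _ hxs]
  have hq : ∀ i, qmap z hz (((1:ℝ)/2)^i • (lp.single 1 (2 * k i) (1:ℝ) : ellOne))
      = ((1:ℝ)/2)^i • d (k i) := fun i => by
    rw [map_smul, qmap_single, hzd]
  rw [tsum_congr hq]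
  exact hsumy.tsum_eq

end

theorem dense_ball_seq (E : Type) [NormedAddCommGroup E] [NormedSpace ℝ E]
    [TopologicalSpace.SeparableSpace E] :
    ∃ d : ℕ → E, (∀ k, ‖d k‖ ≤ 1) ∧ ∀ y : E, ‖y‖ ≤ 1 → ∀ ε > 0, ∃ k, ‖y - d k‖ < ε := by
  have : SecondCountableTopology E := UniformSpace.secondCountable_of_separable E
  have hne : Nonempty (Metric.closedBall (0:E) 1) := ⟨⟨0, by simp⟩⟩
  obtain ⟨u, hu⟩ := TopologicalSpace.exists_dense_seq (Metric.closedBall (0:E) 1)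
  refine ⟨fun k => (u k : E), fun k => ?_, ?_⟩
  · have := Metric.mem_closedBall.1 (u k).2
    rwa [dist_zero_right] at this
  intro y hy ε hε
  obtain ⟨k, hk⟩ := hu.exists_dist_lt (⟨y, by simpa [Metric.mem_closedBall, dist_zero_right] using hy⟩ : Metric.closedBall (0:E) 1) hε
  exact ⟨k, by simpa [Subtype.dist_eq, dist_eq_norm] using hk⟩

set_option maxHeartbeats 1000000 in
/-- There is a surjectively universal isometric involution on `ℓ₁`: every continuous linear
isometric involution of a separable real Banach space lifts to it via a surjective
nonexpansive operator. -/
theorem exists_universal_isometric_involution :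
    ∃ U : ellOne →L[ℝ] ellOne, (∀ x, U (U x) = x) ∧ (∀ x, ‖U x‖ = ‖x‖) ∧
      ∀ (E : Type) [NormedAddCommGroup E] [NormedSpace ℝ E] [CompleteSpace E]
        [SeparableSpace E] (f : E →L[ℝ] E),
        (∀ y, f (f y) = y) → (∀ y, ‖f y‖ = ‖y‖) →
        ∃ q : ellOne →L[ℝ] E, Function.Surjective q ∧ ‖q‖ ≤ 1 ∧
          ∀ x : ellOne, f (q x) = q (U x) := by
  refine ⟨Umap, Umap_invol, Umap_norm, ?_⟩
  intro E _ _ _ _ f hf1 hf2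
  obtain ⟨d, hd1, hd2⟩ := dense_ball_seq E
  set z : ℕ → E := fun n => if Even n then d (n / 2) else f (d (n / 2)) with hzdef
  have hz : ∀ n, ‖z n‖ ≤ 1 := fun n => by
    by_cases h : Even n
    · simpa [hzdef, h] using hd1 (n / 2)
    · simp only [hzdef, if_neg h]
      rw [hf2]
      exact hd1 _
  have hzd : ∀ m, z (2 * m) = d m := fun m => by
    have h2 : (2 * m) / 2 = m := by omega
    simp [hzdef, even_two_mul m, h2]
  have hzf : ∀ n, f (z n) = z (sw n) := by
    intro n
    rcases Nat.even_or_odd n with h | h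
    · obtain ⟨m, rfl⟩ := h
      have he : Even (m + m) := ⟨m, rfl⟩
      have ho : ¬ Even (m + m + 1) := by simp [parity_simps]
      have e1 : (m + m) / 2 = m := by omega
      have e2 : (m + m + 1) / 2 = m := by omega
      simp only [hzdef, sw, if_pos he, if_neg ho, e1, e2]
    · obtain ⟨m, rfl⟩ := h
      have ho : ¬ Even (2 * m + 1) := by simp [parity_simps]
      have he : Even (2 * m) := even_two_mul m
      have e1 : (2 * m + 1) / 2 = m := by omega
      have e2 : (2 * m) / 2 = m := by omega
      have hsw : sw (2 * m + 1) = 2 * m := by simp [sw, ho]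
      simp only [hzdef, hsw, if_neg ho, if_pos he, e1, e2, hf1]
  refine ⟨qmap z hz, ?_, qmap_norm_le z hz, fun x => qmap_equivariant z hz f hzf x⟩
  intro y
  by_cases hy : y = 0
  · exact ⟨0, by simp [hy]⟩
  · have hyn : ‖y‖ ≠ 0 := norm_ne_zero_iff.2 hy
    have h1 : ‖(‖y‖⁻¹ • y)‖ ≤ 1 := by
      rw [norm_smul, norm_inv, norm_norm, inv_mul_cancel₀ hyn]
    obtain ⟨x, hx⟩ := qmap_surj_ball z hz d hzd hd2 _ h1
    refine ⟨‖y‖ • x, ?_⟩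
    rw [map_smul, hx, smul_smul, mul_inv_cancel₀ hyn, one_smul]
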